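/- If f is a preflow on a network and d is a valid labeling for f, then the sink t is not reachable from the source s in the residual graph G_f. -/

import Mathlib

open Finset

/-- A network in the antisymmetric formulation: a capacity function on pairs of
vertices (zero on non-edges), with a source `s` (no edges into it) and a sink
`t` (no edges out of it). -/
structure ANetwork (V : Type) [Fintype V] [DecidableEq V] where
  c : V → V → ℝ
  s : V
  t : V
  hst : s ≠ t
  c_nonneg : ∀ u v, 0 ≤ c u v
  no_into_s : ∀ v, c v s = 0
  no_out_t : ∀ v, c t v = 0

variable {V : Type} [Fintype V] [DecidableEq V]

section AuxChainLemmas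
open List
variable {α : Type*}






lemma sub_decomp : ∀ {l : List α} {x : α}, [x, x] <+ l →
    ∃ l₁ l₂ l₃, l = l₁ ++ x :: (l₂ ++ x :: l₃) := by
  intro l
  induction l with
  | nil => intro x h; exact absurd (List.eq_nil_of_sublist_nil h) (by simp)
  | cons a l ih =>
    intro x h
    cases h with
    | cons _ h' =>
      obtain ⟨l₁, l₂, l₃, rfl⟩ := ih h'
      exact ⟨a :: l₁, l₂, l₃, rfl⟩
    | cons_cons _ h' =>
      have hx : a ∈ l := by
        have := h'.subset; simp at this; exact this
      obtain ⟨l₂, l₃, rfl⟩ := List.append_of_mem hx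
      exact ⟨[], l₂, l₃, rfl⟩

lemma shortcut {r : α → α → Prop} {l₁ l₂ l₃ : List α} {x : α}
    (h : Chain' r (l₁ ++ x :: (l₂ ++ x :: l₃))) :
    Chain' r (l₁ ++ x :: l₃) := by
  unfold List.Chain' at h ⊢
  rw [List.isChain_split] at h ⊢
  refine ⟨h.1, ?_⟩
  have h2 := h.2
  rw [show x :: (l₂ ++ x :: l₃) = (x :: l₂) ++ x :: l₃ by simp,
    List.isChain_split] at h2
  exact h2.2

lemma head?_append_cons (l₁ : List α) (x : α) (t : List α) :
    (l₁ ++ x :: t).head? = (l₁ ++ [x]).head? := by cases l₁ <;> simp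

lemma exists_nodup_chain {r : α → α → Prop} :
    ∀ (n : ℕ) (l : List α), l.length ≤ n → Chain' r l →
    ∃ l', Chain' r l' ∧ l'.Nodup ∧ l'.head? = l.head? ∧ l'.getLast? = l.getLast? := by
  intro n
  induction n with
  | zero =>
    intro l hl _
    exact ⟨l, by assumption, by cases l <;> simp_all, rfl, rfl⟩
  | succ n ih =>
    intro l hl hc
    by_cases hnd : l.Nodup
    · exact ⟨l, hc, hnd, rfl, rfl⟩
    · obtain ⟨x, hx⟩ := List.exists_duplicate_iff_not_nodup.2 hnd
      obtain ⟨l₁, l₂, l₃, rfl⟩ := sub_decomp (List.duplicate_iff_sublist.1 hx)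
      have hlen : (l₁ ++ x :: l₃).length ≤ n := by
        simp only [List.length_append, List.length_cons] at hl ⊢
        omega
      obtain ⟨l', h1, h2, h3, h4⟩ := ih _ hlen (shortcut hc)
      refine ⟨l', h1, h2, ?_, ?_⟩
      · rw [h3]; cases l₁ <;> simp
      · rw [h4, List.getLast?_append_cons, List.getLast?_append_cons,
          show x :: (l₂ ++ x :: l₃) = (x :: l₂) ++ x :: l₃ by simp,
          List.getLast?_append_cons]

lemma chain_label {r : α → α → Prop} {d : α → ℕ∞}
    (hd : ∀ v w, r v w → d v ≤ d w + 1) :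
    ∀ l : List α, Chain' r l → ∀ a b, l.head? = some a → l.getLast? = some b →
      d a ≤ d b + (l.length - 1 : ℕ) := by
  intro l
  induction l with
  | nil => intro _ a b h; simp at h
  | cons x xs ih =>
    intro hc a b ha hb
    cases xs with
    | nil =>
      simp at ha hb
      subst ha; subst hb; simp
    | cons y ys =>
      simp at ha; subst ha
      unfold List.Chain' at hc
      rw [List.isChain_cons_cons] at hc
      have h1 := hd _ _ hc.1
      have h2 := ih hc.2 y b rfl (by rw [← hb]; simp [List.getLast?])
      calc d x ≤ d y + 1 := h1
        _ ≤ (d b + ((y :: ys).length - 1 : ℕ)) + 1 := by exact add_le_add_left h2 1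
        _ = d b + ((x :: y :: ys).length - 1 : ℕ) := by
            simp only [List.length_cons, Nat.add_sub_cancel]
            rw [add_assoc]
            push_cast
            ring

end AuxChainLemmas


/-- A flow in the antisymmetric formulation: an antisymmetric function
respecting capacities with conservation of flow at every vertex other than the
source and the sink. -/
def AFlow (N : ANetwork V) (f : V → V → ℝ) : Prop :=
  (∀ u v, f u v = - f v u) ∧ (∀ u v, f u v ≤ N.c u v) ∧
  ∀ u, u ≠ N.s → u ≠ N.t → ∑ v, f u v = 0

/-- The net flow: the total amount flowing out of the source. -/
def aValue (N : ANetwork V) (f : V → V → ℝ) : ℝ := ∑ v, f N.s v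

/-- The residual capacity of a pair of vertices. -/
def resCap (N : ANetwork V) (f : V → V → ℝ) (u v : V) : ℝ := N.c u v - f u v

/-- `(u, v)` is an edge of the residual graph `G_f` iff its residual capacity
is positive. -/
def ResEdge (N : ANetwork V) (f : V → V → ℝ) (u v : V) : Prop :=
  0 < resCap N f u v

/-- A preflow: antisymmetric, respecting capacities, with nonnegative excess
at every vertex other than the source. -/
def IsPreflow (N : ANetwork V) (f : V → V → ℝ) : Prop :=
  (∀ u v, f u v = - f v u) ∧ (∀ u v, f u v ≤ N.c u v) ∧
  ∀ x, x ≠ N.s → 0 ≤ ∑ v, f x v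

/-- A valid labeling for a preflow `f`: `d s = n`, `d t = 0` and
`d v ≤ d w + 1` for every residual edge `(v, w)`. -/
def IsValidLabeling (N : ANetwork V) (f : V → V → ℝ) (d : V → ℕ∞) : Prop :=
  d N.s = (Fintype.card V : ℕ∞) ∧ d N.t = 0 ∧
  ∀ v w, ResEdge N f v w → d v ≤ d w + 1

/-- if `f` is a preflow and `d` a valid labeling for `f`, then the
sink is not reachable from the source in the residual graph. -/
theorem sink_not_reachable (N : ANetwork V) (f : V → V → ℝ) (d : V → ℕ∞)
    (hf : IsPreflow N f) (hd : IsValidLabeling N f d) :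
    ¬ ∃ p : List V, List.Chain (ResEdge N f) N.s p ∧
        (N.s :: p).getLast (List.cons_ne_nil _ _) = N.t := by
  rintro ⟨p, hchain, hlast⟩
  obtain ⟨hds, hdt, hdl⟩ := hd
  have hc' : List.Chain' (ResEdge N f) (N.s :: p) := hchain
  obtain ⟨l', h1, h2, h3, h4⟩ :=
    exists_nodup_chain (N.s :: p).length (N.s :: p) le_rfl hc'
  have hh : l'.head? = some N.s := by rw [h3]; rfl
  have hl : l'.getLast? = some N.t := by
    rw [h4, List.getLast?_eq_getLast_of_ne_nil (List.cons_ne_nil _ _), hlast]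
  have hb := chain_label hdl l' h1 N.s N.t hh hl
  have hlen : l'.length ≤ Fintype.card V := h2.length_le_card
  have hpos : 1 ≤ l'.length := by
    cases l' with
    | nil => simp at hh
    | cons a l => simp
  rw [hds, hdt, zero_add] at hb
  have hfin : Fintype.card V ≤ l'.length - 1 := by exact_mod_cast hb
  omega
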